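/- arXiv:1301.0014 — 5 statements merged into one kernel-verified Lean document; each statement's English description precedes it below -/
import Mathlib

section
/- Let F be a finite field of order q. If H ⊆ F^n is a 1-perfect code, then the Vasil'ev–Schönheim code C(H,f) is a 1-perfect code in F^{qn+1}, for any function f : H → F. -/
open Finset

/-- The Vasil'ev–Schönheim code built from a set `H ⊆ F^n` and `f : H → F`. -/
def VScode {F : Type*} [Field F] [Fintype F] {n : ℕ}
    (H : Set (Fin n → F)) (f : H → F) :
    Set ((F → (Fin n → F)) × F) :=
  {x | ∃ hc : (∑ α, x.1 α) ∈ H,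
    x.2 = (∑ α : F, α * (∑ j, x.1 α j)) + f ⟨∑ α, x.1 α, hc⟩}

/-- Hamming distance on `F^{qn+1}` written as block families with a final coordinate. -/
def bdist {F : Type*} [Fintype F] [DecidableEq F] {n : ℕ}
    (x y : (F → (Fin n → F)) × F) : ℕ :=
  (Finset.univ.filter fun a : F × Fin n => x.1 a.1 a.2 ≠ y.1 a.1 a.2).card +
    (if x.2 = y.2 then 0 else 1)

section Helpers

variable {F : Type*} [Field F] [Fintype F] [DecidableEq F] {n : ℕ}

/-- One-dimensional sum-shift: if two families agree off `i₀`, their sums differ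
by the difference at `i₀`. -/
lemma sum1 {ι : Type*} [Fintype ι] [DecidableEq ι] (a b : ι → F) (i₀ : ι)
    (h : ∀ i, i ≠ i₀ → b i = a i) : ∑ i, b i = (∑ i, a i) + (b i₀ - a i₀) := by
  rw [← Finset.add_sum_erase _ b (mem_univ i₀), ← Finset.add_sum_erase _ a (mem_univ i₀)]
  have : ∑ i ∈ univ.erase i₀, b i = ∑ i ∈ univ.erase i₀, a i := by
    refine Finset.sum_congr rfl fun i hi => h i (Finset.ne_of_mem_erase hi)
  rw [this]; ring

lemma sumA (v w : F → Fin n → F) (α₀ : F) (j₀ : Fin n)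
    (hw : ∀ β j, (β, j) ≠ (α₀, j₀) → w β j = v β j) (j : Fin n) :
    (∑ α, w α) j = (∑ α, v α) j + (if j = j₀ then w α₀ j₀ - v α₀ j₀ else 0) := by
  rw [Finset.sum_apply, Finset.sum_apply]
  by_cases hj : j = j₀
  · subst hj
    simp only [if_pos rfl]
    exact sum1 (fun α => v α j) (fun α => w α j) α₀
      (fun α hα => hw α j (by simp [hα]))
  · simp only [if_neg hj, add_zero]
    exact Finset.sum_congr rfl fun α _ => hw α j (by simp [hj])

lemma sumB (v w : F → Fin n → F) (α₀ : F) (j₀ : Fin n)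
    (hw : ∀ β j, (β, j) ≠ (α₀, j₀) → w β j = v β j) :
    (∑ α : F, α * ∑ j, w α j) = (∑ α : F, α * ∑ j, v α j) + α₀ * (w α₀ j₀ - v α₀ j₀) := by
  have h1 : ∑ j, w α₀ j = (∑ j, v α₀ j) + (w α₀ j₀ - v α₀ j₀) :=
    sum1 (v α₀) (w α₀) j₀ (fun j hj => hw α₀ j (by simp [hj]))
  have h2 := sum1 (fun α : F => α * ∑ j, v α j) (fun α : F => α * ∑ j, w α j) α₀
    (fun α hα => by
      have h3 : ∑ j, w α j = ∑ j, v α j :=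
        Finset.sum_congr rfl fun j _ => hw α j (by simp [hα])
      show α * ∑ j, w α j = α * ∑ j, v α j
      rw [h3])
  rw [h2, h1]; ring

lemma hamC (v w : F → Fin n → F) (α₀ : F) (j₀ : Fin n)
    (hw : ∀ β j, (β, j) ≠ (α₀, j₀) → w β j = v β j) :
    hammingDist (∑ α, v α) (∑ α, w α) ≤ 1 := by
  have : (univ.filter fun j => (∑ α, v α) j ≠ (∑ α, w α) j) ⊆ {j₀} := by
    intro j hj
    simp only [mem_filter, mem_univ, true_and] at hj
    simp only [mem_singleton]
    by_contra hne
    exact hj (by rw [sumA v w α₀ j₀ hw j, if_neg hne, add_zero])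
  calc hammingDist (∑ α, v α) (∑ α, w α)
      = (univ.filter fun j => (∑ α, v α) j ≠ (∑ α, w α) j).card := rfl
    _ ≤ ({j₀} : Finset (Fin n)).card := Finset.card_le_card this
    _ = 1 := Finset.card_singleton j₀

/-- Shape of a word at `bdist ≤ 1` from `x`. -/
lemma bdist_shape (x c : (F → (Fin n → F)) × F) (h : bdist x c ≤ 1) :
    c.1 = x.1 ∨ (∃ α₀ j₀, c.1 α₀ j₀ ≠ x.1 α₀ j₀ ∧
      (∀ β j, ((β : F), j) ≠ (α₀, j₀) → c.1 β j = x.1 β j) ∧ c.2 = x.2) := by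
  unfold bdist at h
  set S := univ.filter fun a : F × Fin n => x.1 a.1 a.2 ≠ c.1 a.1 a.2 with hS
  by_cases hp : x.2 = c.2
  · rw [if_pos hp, add_zero] at h
    rcases Finset.eq_empty_or_nonempty S with he | ⟨a, ha⟩
    · left
      funext β j
      have : (β, j) ∉ S := he ▸ Finset.notMem_empty _
      simp only [hS, mem_filter, mem_univ, true_and, not_not] at this
      exact this.symm
    · right
      refine ⟨a.1, a.2, ?_, ?_, hp.symm⟩
      · have := (Finset.mem_filter.mp ha).2
        exact Ne.symm this
      · intro β j hne
        by_contra hcon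
        have hmem : (β, j) ∈ S := by
          simp only [hS, mem_filter, mem_univ, true_and]
          exact fun hh => hcon hh.symm
        have : (β, j) = a := Finset.card_le_one.mp h _ hmem _ ha
        exact hne this
  · rw [if_neg hp] at h
    left
    have hc : S.card = 0 := by omega
    have he : S = ∅ := Finset.card_eq_zero.mp hc
    funext β j
    have : (β, j) ∉ S := he ▸ Finset.notMem_empty _
    simp only [hS, mem_filter, mem_univ, true_and, not_not] at this
    exact this.symm

/-- If blocks agree, `bdist ≤ 1`. -/
lemma bdist_blocks_eq (x c : (F → (Fin n → F)) × F) (h : c.1 = x.1) :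
    bdist x c ≤ 1 := by
  unfold bdist
  have : (univ.filter fun a : F × Fin n => x.1 a.1 a.2 ≠ c.1 a.1 a.2) = ∅ := by
    refine Finset.filter_false_of_mem fun a _ => ?_
    rw [h]; exact not_not_intro rfl
  rw [this]
  simp only [Finset.card_empty, zero_add]
  split <;> omega

end Helpers

/-- If `H` is a 1-perfect code in `F^n`, then `C(H,f)` is a 1-perfect code
in `F^{qn+1}` for every `f : H → F`. -/
theorem stmt5 {F : Type*} [Field F] [Fintype F] [DecidableEq F] {n : ℕ}
    (H : Set (Fin n → F)) (f : H → F)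
    (hH : ∀ v : Fin n → F, ∃! c, c ∈ H ∧ hammingDist v c ≤ 1) :
    ∀ x : (F → (Fin n → F)) × F, ∃! c, c ∈ VScode H f ∧ bdist x c ≤ 1 := by
  intro x
  obtain ⟨v, p⟩ := x
  set V : Fin n → F := ∑ α, v α with hV
  set P : F := ∑ α : F, α * ∑ j, v α j with hP
  obtain ⟨c₀, ⟨hc₀H, hc₀d⟩, hcu⟩ := hH V
  by_cases hVH : V ∈ H
  · -- Case 1 : the block sum is already in H
    refine ⟨(v, P + f ⟨V, hVH⟩), ⟨⟨hVH, rfl⟩, bdist_blocks_eq _ _ rfl⟩, ?_⟩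
    rintro ⟨w, s⟩ ⟨⟨hyH, hys⟩, hyd⟩
    rcases bdist_shape _ _ hyd with h1 | ⟨α₀, j₀, hne, hoff, hs⟩
    · -- blocks equal
      simp only at h1
      subst h1
      exact Prod.ext rfl hys
    · -- one block coordinate changed : impossible
      exfalso
      simp only at hne hoff hs
      have hd : hammingDist V (∑ α, w α) ≤ 1 := hamC v w α₀ j₀ hoff
      have h1 : ∑ α, w α = c₀ := hcu _ ⟨hyH, hd⟩
      have h2 : V = c₀ := hcu _ ⟨hVH, by simp⟩
      have := sumA v w α₀ j₀ hoff j₀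
      rw [if_pos rfl, h1, ← h2] at this
      have : w α₀ j₀ = v α₀ j₀ := by linear_combination -this
      exact hne this
  · -- Case 2 : the block sum is not in H; c₀ differs from V at exactly one j₀
    have hc₀ne : c₀ ≠ V := fun h => hVH (h ▸ hc₀H)
    -- extract the unique differing coordinate
    obtain ⟨j₀, hj₀ne, hj₀off⟩ :
        ∃ j₀, V j₀ ≠ c₀ j₀ ∧ ∀ j, j ≠ j₀ → V j = c₀ j := by
      have hdd : (univ.filter fun j => V j ≠ c₀ j).card ≤ 1 := hc₀d
      rcases Finset.eq_empty_or_nonempty (univ.filter fun j => V j ≠ c₀ j) with he | ⟨j₀, hj₀⟩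
      · exfalso
        apply hc₀ne
        funext j
        have : j ∉ (univ.filter fun j => V j ≠ c₀ j) := he ▸ Finset.notMem_empty _
        simp only [mem_filter, mem_univ, true_and, not_not] at this
        exact this.symm
      · refine ⟨j₀, (Finset.mem_filter.mp hj₀).2, fun j hj => ?_⟩
        by_contra hcon
        have hmem : j ∈ (univ.filter fun j => V j ≠ c₀ j) := by
          simp only [mem_filter, mem_univ, true_and]; exact hcon
        exact hj (Finset.card_le_one.mp hdd _ hmem _ hj₀)
    set δ : F := c₀ j₀ - V j₀ with hδ
    have hδne : δ ≠ 0 := fun h => hj₀ne (by linear_combination hδ - h)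
    set t : F := p - P - f ⟨c₀, hc₀H⟩ with ht
    set α₀ : F := t * δ⁻¹ with hα₀
    set w : F → Fin n → F :=
      fun α => if α = α₀ then Function.update (v α₀) j₀ (v α₀ j₀ + δ) else v α with hw
    have hoff : ∀ β j, ((β : F), j) ≠ (α₀, j₀) → w β j = v β j := by
      intro β j hne
      rw [hw]
      by_cases hβ : β = α₀
      · subst hβ
        have hj : j ≠ j₀ := fun h => hne (by rw [h])
        simp [Function.update_of_ne hj]
      · simp [hβ]
    have hwδ : w α₀ j₀ - v α₀ j₀ = δ := by
      simp [hw]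
    have hsumw : ∑ α, w α = c₀ := by
      funext j
      rw [sumA v w α₀ j₀ hoff j]
      by_cases hj : j = j₀
      · subst hj; rw [if_pos rfl, hwδ, ← hV]; rw [hδ]; ring
      · rw [if_neg hj, add_zero, ← hV]; exact hj₀off j hj
    have hparw : (∑ α : F, α * ∑ j, w α j) = P + t := by
      rw [sumB v w α₀ j₀ hoff, hwδ, ← hP, hα₀]
      field_simp
    refine ⟨(w, p), ⟨⟨hsumw ▸ hc₀H, ?_⟩, ?_⟩, ?_⟩
    · -- parity check of the candidate
      have hfe : f ⟨∑ α, w α, hsumw ▸ hc₀H⟩ = f ⟨c₀, hc₀H⟩ :=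
        congrArg f (Subtype.ext hsumw)
      simp only [hfe, hparw]
      rw [ht]; ring
    · -- distance ≤ 1
      unfold bdist
      have hsub : (univ.filter fun a : F × Fin n => v a.1 a.2 ≠ w a.1 a.2) ⊆ {(α₀, j₀)} := by
        intro a ha
        simp only [mem_filter, mem_univ, true_and] at ha
        simp only [mem_singleton]
        by_contra hcon
        exact ha (hoff a.1 a.2 (by simpa using hcon)).symm
      simp only [if_pos rfl, add_zero]
      calc (univ.filter fun a : F × Fin n => v a.1 a.2 ≠ w a.1 a.2).card
          ≤ ({(α₀, j₀)} : Finset (F × Fin n)).card := Finset.card_le_card hsub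
        _ = 1 := rfl
    · -- uniqueness
      rintro ⟨u, s⟩ ⟨⟨hyH, hys⟩, hyd⟩
      rcases bdist_shape _ _ hyd with h1 | ⟨α₁, j₁, hne1, hoff1, hs1⟩
      · exfalso
        simp only at h1
        subst h1
        exact hVH hyH
      · simp only at hne1 hoff1 hs1
        subst hs1
        have hd : hammingDist V (∑ α, u α) ≤ 1 := hamC v u α₁ j₁ hoff1
        have hsumu : ∑ α, u α = c₀ := hcu _ ⟨hyH, hd⟩
        -- j₁ = j₀
        have hj₁ : j₁ = j₀ := by
          by_contra hcon
          have h5 := sumA v u α₁ j₁ hoff1 j₀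
          rw [if_neg (Ne.symm hcon), add_zero] at h5
          have h6 : (∑ α, u α) j₀ = c₀ j₀ := by rw [hsumu]
          have h7 : (∑ α, v α) j₀ = V j₀ := by rw [← hV]
          rw [h6, h7] at h5
          exact hj₀ne h5.symm
        subst hj₁
        -- δ₁ = δ
        have hδ1 : u α₁ j₁ - v α₁ j₁ = δ := by
          have h5 := sumA v u α₁ j₁ hoff1 j₁
          rw [if_pos rfl] at h5
          have h6 : (∑ α, u α) j₁ = c₀ j₁ := by rw [hsumu]
          have h7 : (∑ α, v α) j₁ = V j₁ := by rw [← hV]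
          rw [h6, h7] at h5
          linear_combination -h5 - hδ
        -- α₁ = α₀
        have hα₁ : α₁ = α₀ := by
          have hfe : f ⟨∑ α, u α, hyH⟩ = f ⟨c₀, hc₀H⟩ :=
            congrArg f (Subtype.ext hsumu)
          rw [sumB v u α₁ j₁ hoff1, hδ1, hfe, ← hP] at hys
          have h8 : α₁ * δ = t := by rw [ht]; linear_combination -hys
          rw [hα₀, ← h8]
          field_simp
        refine Prod.ext ?_ rfl
        funext β j
        show u β j = w β j
        by_cases hbj : ((β : F), j) = (α₀, j₁)
        · have hb : β = α₀ := congrArg Prod.fst hbj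
          have hj : j = j₁ := congrArg Prod.snd hbj
          have h3 : u β j = v β j + δ := by
            rw [hb, hj, ← hα₁]
            linear_combination hδ1
          have h4 : w β j = v β j + δ := by
            rw [hb, hj]
            linear_combination hwδ
          rw [h3, h4]
        · have hbj1 : ((β : F), j) ≠ (α₁, j₁) := by
            rw [hα₁]; exact hbj
          rw [hoff1 β j hbj1, (hoff β j hbj).symm]
end

section
/- Let F be a finite field, H ⊆ F^n, f : H → F, j ∈ {1,…,n}, β ∈ F, and define f'(x) = f(x) + β·x_j. Let Π_j^β be the coordinate permutation of F^{qn+1} that, for each α ∈ F, places the j-th coordinate of block v_{α+β} into the j-th coordinate of block v_α, fixing all other coordinates. Then C(H,f') = Π_j^β(C(H,f)). -/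
open Finset

/-- The coordinate permutation `Π_j^β`: in position `j` of each block, block `α`
receives the entry of block `α + β`; all other coordinates are fixed. -/
def PiPerm {F : Type*} [Field F] {n : ℕ} [DecidableEq (Fin n)] (j : Fin n) (β : F)
    (x : (F → (Fin n → F)) × F) : (F → (Fin n → F)) × F :=
  (fun α i => if i = j then x.1 (α + β) i else x.1 α i, x.2)

lemma piperm_inv {F : Type*} [Field F] {n : ℕ} (j : Fin n) (β : F)
    (x : (F → (Fin n → F)) × F) : PiPerm j β (PiPerm j (-β) x) = x := by
  unfold PiPerm
  ext α i
  · by_cases h : i = j <;> simp [h]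
  · rfl

lemma sum_blocks {F : Type*} [Field F] [Fintype F] {n : ℕ} (j : Fin n) (β : F)
    (x : (F → (Fin n → F)) × F) (i : Fin n) :
    ∑ α : F, (PiPerm j β x).1 α i = ∑ α : F, x.1 α i := by
  by_cases h : i = j
  · subst h
    simp only [PiPerm, if_pos rfl]
    exact Fintype.sum_equiv (Equiv.addRight β) _ _ (fun _ => rfl)
  · simp [PiPerm, h]

lemma sum_blocks' {F : Type*} [Field F] [Fintype F] {n : ℕ} (j : Fin n) (β : F)
    (x : (F → (Fin n → F)) × F) :
    ∑ α : F, (PiPerm j β x).1 α = ∑ α : F, x.1 α := by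
  funext i
  simpa [Finset.sum_apply] using sum_blocks j β x i

lemma checksum {F : Type*} [Field F] [Fintype F] {n : ℕ} (j : Fin n) (β : F)
    (x : (F → (Fin n → F)) × F) :
    ∑ α : F, α * ∑ i, (PiPerm j β x).1 α i
      = (∑ α : F, α * ∑ i, x.1 α i) - β * ∑ α : F, x.1 α j := by
  have h1 : ∀ α : F, ∑ i, (PiPerm j β x).1 α i
      = (∑ i, x.1 α i) + (x.1 (α + β) j - x.1 α j) := by
    intro α
    have : ∀ i : Fin n, (PiPerm j β x).1 α i
        = x.1 α i + (if i = j then x.1 (α + β) j - x.1 α j else 0) := by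
      intro i
      by_cases h : i = j <;> simp [PiPerm, h]
    simp [this, Finset.sum_add_distrib]
  have h2 : ∑ α : F, α * x.1 (α + β) j
      = (∑ α : F, α * x.1 α j) - β * ∑ α : F, x.1 α j := by
    have := Fintype.sum_equiv (Equiv.addRight β) (fun α : F => α * x.1 (α + β) j)
      (fun γ : F => (γ - β) * x.1 γ j) (by intro γ; simp)
    rw [this]
    simp [sub_mul, Finset.sum_sub_distrib, Finset.mul_sum]
  calc ∑ α : F, α * ∑ i, (PiPerm j β x).1 α i
      = ∑ α : F, (α * ∑ i, x.1 α i + (α * x.1 (α + β) j - α * x.1 α j)) := by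
        simp only [h1]; congr 1; funext α; ring
    _ = (∑ α : F, α * ∑ i, x.1 α i) + ((∑ α : F, α * x.1 (α + β) j) - ∑ α : F, α * x.1 α j) := by
        simp [Finset.sum_add_distrib, Finset.sum_sub_distrib]
    _ = _ := by rw [h2]; ring

lemma mem_piperm {F : Type*} [Field F] [Fintype F] {n : ℕ}
    (H : Set (Fin n → F)) (f : H → F) (j : Fin n) (β : F)
    (x : (F → (Fin n → F)) × F) :
    PiPerm j β x ∈ VScode H (fun c => f c + β * (c : Fin n → F) j) ↔ x ∈ VScode H f := by
  unfold VScode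
  simp only [Set.mem_setOf_eq, sum_blocks' j β x, checksum j β x]
  constructor
  · rintro ⟨hc, hp⟩
    refine ⟨hc, ?_⟩
    have hpi : (PiPerm j β x).2 = x.2 := rfl
    rw [hpi] at hp
    rw [hp]
    have : (∑ α : F, x.1 α) j = ∑ α : F, x.1 α j := by simp [Finset.sum_apply]
    rw [this]; ring
  · rintro ⟨hc, hp⟩
    refine ⟨hc, ?_⟩
    show x.2 = _
    rw [hp]
    have : (∑ α : F, x.1 α) j = ∑ α : F, x.1 α j := by simp [Finset.sum_apply]
    rw [this]; ring

/-- Adding the linear term `β·x_j` to `f` transforms the code `C(H,f)` by the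
coordinate permutation `Π_j^β`. -/
theorem stmt6 {F : Type*} [Field F] [Fintype F] {n : ℕ}
    (H : Set (Fin n → F)) (f : H → F) (j : Fin n) (β : F) :
    VScode H (fun x => f x + β * (x : Fin n → F) j)
      = PiPerm j β '' VScode H f := by

  ext y
  constructor
  · intro hy
    refine ⟨PiPerm j (-β) y, ?_, piperm_inv j β y⟩
    rw [← mem_piperm H f j β, piperm_inv j β y]
    exact hy
  · rintro ⟨x, hx, rfl⟩
    exact (mem_piperm H f j β x).mpr hx
end

section
/- Let F be a finite field, H a linear subspace of F^n, f : H → F quadratic with a fixed degree-≤2 polynomial representation, and for c ∈ H let Π^c = Π_1^{β_1^c} ∘ … ∘ Π_n^{β_n^c}, where β_i^c are the linear coefficients of x ↦ f(x+c) − f(x). Then Π^c ∘ Π^d = Π^{c+d} for all c, d ∈ H; i.e., c ↦ Π^c is a group homomorphism from (H,+) to the permutation group of F^{qn+1}. -/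
open Finset

/-- The coefficient of `X i` in `p(X + c) - p(X)`. -/
noncomputable def linCoeff {F : Type*} [Field F] {n : ℕ}
    (p : MvPolynomial (Fin n) F) (c : Fin n → F) (i : Fin n) : F :=
  MvPolynomial.coeff (Finsupp.single i 1)
    ((MvPolynomial.bind₁ (fun j => MvPolynomial.X j + MvPolynomial.C (c j)) p) - p)

/-- `Π^c = Π_1^{b 1} ∘ … ∘ Π_n^{b n}` where `b i = β_i^c`: position `j` of
block `α` receives the entry of block `α + b j`. -/
def PiVec {F : Type*} [Field F] {n : ℕ} (b : Fin n → F)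
    (x : (F → (Fin n → F)) × F) : (F → (Fin n → F)) × F :=
  (fun α i => x.1 (α + b i) i, x.2)

namespace AuxStmt8

open MvPolynomial

variable {F : Type*} [Field F] {n : ℕ}

/-- pderiv commutes with the shift substitution. -/
lemma pderiv_shift (c : Fin n → F) (i : Fin n) (p : MvPolynomial (Fin n) F) :
    pderiv i (bind₁ (fun j => X j + C (c j)) p)
      = bind₁ (fun j => X j + C (c j)) (pderiv i p) := by
  induction p using MvPolynomial.induction_on with
  | C a => simp
  | add p q hp hq => simp [hp, hq]
  | mul_X p j hp =>
      simp only [map_mul, bind₁_X_right, pderiv_mul, hp, map_add]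
      rcases eq_or_ne i j with rfl | hij
      · simp
      · simp [pderiv_X_of_ne (Ne.symm hij)]

lemma coeff_single_eq (i : Fin n) (q : MvPolynomial (Fin n) F) :
    coeff (Finsupp.single i 1) q = constantCoeff (pderiv i q) := by
  classical
  induction q using MvPolynomial.induction_on' with
  | add p q hp hq => simp [coeff_add, hp, hq]
  | monomial m a =>
      rw [coeff_monomial, pderiv_monomial, constantCoeff_monomial]
      rcases eq_or_ne (Finsupp.single i 1) m with rfl | hm
      · simp
      · rw [if_neg (Ne.symm hm)]
        rcases eq_or_ne (m - Finsupp.single i 1) 0 with h0 | h0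
        · rw [if_pos h0]
          have hle : m ≤ Finsupp.single i 1 := tsub_eq_zero_iff_le.mp h0
          have hmi : m i = 0 := by
            by_contra hne
            apply hm
            ext k
            have hk : m k ≤ Finsupp.single i 1 k := Finsupp.le_def.mp hle k
            simp only [Finsupp.single_apply] at hk ⊢
            rcases eq_or_ne i k with rfl | hki
            · simp only [if_pos rfl] at hk ⊢
              simp at hk ⊢
              omega
            · simp only [if_neg hki] at hk ⊢
              omega
          simp [hmi]
        · rw [if_neg h0]

lemma constantCoeff_shift (c : Fin n → F) (q : MvPolynomial (Fin n) F) :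
    constantCoeff (bind₁ (fun j => X j + C (c j)) q) = eval c q := by
  rw [hom_bind₁]
  rw [constantCoeff_comp_C]
  simp only [map_add, constantCoeff_X, constantCoeff_C, zero_add]
  rfl

lemma linCoeff_eq (p : MvPolynomial (Fin n) F) (c : Fin n → F) (i : Fin n) :
    linCoeff p c i = eval c (pderiv i p) - eval (0 : Fin n → F) (pderiv i p) := by
  unfold linCoeff
  rw [coeff_sub, coeff_single_eq, coeff_single_eq, pderiv_shift, constantCoeff_shift]
  rw [show (eval (0 : Fin n → F)) ((pderiv i) p) = constantCoeff ((pderiv i) p) by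
    rw [eval_zero]]

lemma sum_sub_single (m : Fin n →₀ ℕ) (i : Fin n) (h : m i ≠ 0) :
    ((m - Finsupp.single i 1).sum fun _ e => e) + 1 = m.sum fun _ e => e := by
  classical
  have hadd : ((m - Finsupp.single i 1) + Finsupp.single i 1) = m := by
    ext k
    simp only [Finsupp.coe_add, Pi.add_apply, Finsupp.tsub_apply, Finsupp.single_apply]
    rcases eq_or_ne i k with rfl | hik
    · simp only [if_pos rfl]
      simp only [if_true]
      have : m i ≠ 0 := h
      omega
    · simp only [if_neg hik]
      omega
  conv_rhs => rw [← hadd]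
  rw [Finsupp.sum_add_index' (fun _ => rfl) (fun _ _ _ => rfl),
    Finsupp.sum_single_index rfl]

lemma totalDegree_pderiv_le (p : MvPolynomial (Fin n) F) (hp : p.totalDegree ≤ 2) (i : Fin n) :
    (pderiv i p).totalDegree ≤ 1 := by
  classical
  conv_lhs => rw [p.as_sum, map_sum]
  refine (totalDegree_finset_sum _ _).trans (Finset.sup_le fun m hm => ?_)
  rw [pderiv_monomial]
  rcases eq_or_ne (m i) 0 with h0 | h0
  · simp [h0]
  · refine (totalDegree_monomial_le _ _).trans ?_
    show ((m - Finsupp.single i 1).sum fun _ e => e) ≤ 1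
    have hmsum : (m.sum fun _ e => e) ≤ 2 := (le_totalDegree hm).trans hp
    have := sum_sub_single m i h0
    omega

lemma monomial_small (m : Fin n →₀ ℕ) (hm : (m.sum fun _ e => e) ≤ 1) :
    m = 0 ∨ ∃ j, m = Finsupp.single j 1 := by
  classical
  rcases eq_or_ne m 0 with rfl | hne
  · exact Or.inl rfl
  right
  obtain ⟨j, hj⟩ := Finsupp.support_nonempty_iff.mpr hne
  refine ⟨j, ?_⟩
  have hm' : ∑ k ∈ m.support, m k ≤ 1 := hm
  have h2 : m j + ∑ k ∈ m.support.erase j, m k = ∑ k ∈ m.support, m k :=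
    Finset.add_sum_erase _ _ hj
  have hjpos : 1 ≤ m j := Nat.one_le_iff_ne_zero.mpr (Finsupp.mem_support_iff.mp hj)
  have herase : ∀ k ∈ m.support.erase j, m k = 0 := by
    intro k hk
    have h3 : m k ≤ ∑ k ∈ m.support.erase j, m k :=
      Finset.single_le_sum (fun _ _ => Nat.zero_le _) hk
    omega
  ext k
  simp only [Finsupp.single_apply]
  rcases eq_or_ne j k with rfl | hkj
  · simp only [if_pos rfl, if_true]; omega
  · simp only [if_neg hkj]
    by_contra hne'
    exact hne' (herase k (Finset.mem_erase.mpr ⟨Ne.symm hkj, Finsupp.mem_support_iff.mpr hne'⟩))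

lemma eval_affine_add (g : MvPolynomial (Fin n) F) (hg : g.totalDegree ≤ 1)
    (c d : Fin n → F) :
    eval (c + d) g + eval (0 : Fin n → F) g = eval c g + eval d g := by
  classical
  rw [eval_eq, eval_eq, eval_eq, eval_eq, ← Finset.sum_add_distrib, ← Finset.sum_add_distrib]
  refine Finset.sum_congr rfl fun m hm => ?_
  rw [← mul_add, ← mul_add]
  congr 1
  rcases monomial_small m ((le_totalDegree hm).trans hg) with rfl | ⟨j, rfl⟩
  · simp
  · rw [Finsupp.support_single_ne_zero _ one_ne_zero]
    simp

lemma linCoeff_add (p : MvPolynomial (Fin n) F) (hp : p.totalDegree ≤ 2)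
    (c d : Fin n → F) (i : Fin n) :
    linCoeff p (c + d) i = linCoeff p c i + linCoeff p d i := by
  have h := eval_affine_add (pderiv i p) (totalDegree_pderiv_le p hp i) c d
  rw [linCoeff_eq, linCoeff_eq, linCoeff_eq]
  linear_combination h

end AuxStmt8

/-- For quadratic `f`, the permutations `Π^c` satisfy `Π^c ∘ Π^d = Π^{c+d}`,
i.e. `c ↦ Π^c` is a homomorphism from `(H,+)` to permutations of `F^{qn+1}`. -/
theorem stmt8 {F : Type*} [Field F] [Fintype F] {n : ℕ}
    (H : Submodule F (Fin n → F)) (f : H → F)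
    (p : MvPolynomial (Fin n) F) (hp : p.totalDegree ≤ 2)
    (hf : ∀ x : H, f x = MvPolynomial.eval (x : Fin n → F) p) :
    ∀ c d : H,
      PiVec (linCoeff p (c : Fin n → F)) ∘ PiVec (linCoeff p (d : Fin n → F))
        = PiVec (linCoeff p ((c : Fin n → F) + (d : Fin n → F))) := by
  intro c d
  funext x
  unfold PiVec
  simp only [Function.comp_apply]
  refine Prod.ext ?_ rfl
  funext α i
  show x.1 (α + linCoeff p (c : Fin n → F) i + linCoeff p (d : Fin n → F) i) i
      = x.1 (α + linCoeff p ((c : Fin n → F) + (d : Fin n → F)) i) i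
  rw [AuxStmt8.linCoeff_add p hp _ _ i, add_assoc]
end

section
/- Let F be a finite field of order q. The automorphism group of the Hamming graph on F^N has order (q!)^N · N!. -/
open Finset
set_option linter.unusedSectionVars false

/-- The Hamming graph on `F^N`: two words adjacent iff they differ in exactly
one coordinate. -/
def hammingGraph (F : Type*) [DecidableEq F] (N : ℕ) : SimpleGraph (Fin N → F) :=
  SimpleGraph.fromRel (fun x y => hammingDist x y = 1)
section basics
variable {F : Type*} [DecidableEq F] {N : ℕ}

/-- `x` and `y` differ exactly at coordinate `i`. -/
def DiffAt (i : Fin N) (x y : Fin N → F) : Prop :=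
  x i ≠ y i ∧ ∀ j, j ≠ i → x j = y j

theorem DiffAt.symm {i : Fin N} {x y : Fin N → F} (h : DiffAt i x y) : DiffAt i y x :=
  ⟨h.1.symm, fun j hj => (h.2 j hj).symm⟩

theorem DiffAt.ne {i : Fin N} {x y : Fin N → F} (h : DiffAt i x y) : x ≠ y :=
  fun e => h.1 (by rw [e])

theorem DiffAt.unique {i j : Fin N} {x y : Fin N → F} (h : DiffAt i x y)
    (h' : DiffAt j x y) : i = j := by
  by_contra hne
  exact h'.1 (h.2 j (fun e => hne (e ▸ rfl)))

theorem diffAt_of_agree {c : Fin N} {x y : Fin N → F} (hne : x ≠ y)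
    (h : ∀ j, j ≠ c → x j = y j) : DiffAt c x y := by
  refine ⟨fun hc => hne (funext fun j => ?_), h⟩
  by_cases hj : j = c
  · subst hj; exact hc
  · exact h j hj

theorem hammingDist_eq_one_iff {x y : Fin N → F} :
    hammingDist x y = 1 ↔ ∃ i, DiffAt i x y := by
  unfold hammingDist
  rw [Finset.card_eq_one]
  constructor
  · rintro ⟨i, hi⟩
    refine ⟨i, ?_, fun j hj => ?_⟩
    · have : i ∈ ({i} : Finset (Fin N)) := Finset.mem_singleton_self i
      rw [← hi, Finset.mem_filter] at this
      exact this.2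
    · by_contra hne
      have : j ∈ ({i} : Finset (Fin N)) := by
        rw [← hi, Finset.mem_filter]; exact ⟨Finset.mem_univ _, hne⟩
      exact hj (Finset.mem_singleton.mp this)
  · rintro ⟨i, hi⟩
    refine ⟨i, Finset.ext fun j => ?_⟩
    simp only [Finset.mem_filter, Finset.mem_univ, true_and, Finset.mem_singleton]
    constructor
    · intro hj; by_contra hne; exact hj (hi.2 j hne)
    · rintro rfl; exact hi.1

theorem adj_iff {x y : Fin N → F} :
    (hammingGraph F N).Adj x y ↔ ∃ i, DiffAt i x y := by
  unfold hammingGraph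
  rw [SimpleGraph.fromRel_adj]
  constructor
  · rintro ⟨hne, h | h⟩
    · exact hammingDist_eq_one_iff.mp h
    · obtain ⟨i, hi⟩ := hammingDist_eq_one_iff.mp h
      exact ⟨i, hi.symm⟩
  · rintro ⟨i, hi⟩
    exact ⟨hi.ne, Or.inl (hammingDist_eq_one_iff.mpr ⟨i, hi⟩)⟩

/-- If `x` and `y` differ in two distinct coordinates, they are not adjacent. -/
theorem not_adj_of_two_diffs {i j : Fin N} {x y : Fin N → F} (hij : i ≠ j)
    (hi : x i ≠ y i) (hj : x j ≠ y j) : ¬ (hammingGraph F N).Adj x y := by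
  rw [adj_iff]
  rintro ⟨k, hk⟩
  rcases eq_or_ne i k with rfl | hik
  · exact hj (hk.2 j (Ne.symm hij))
  · exact hi (hk.2 i hik)

/-- Triangle lemma: edges of a triangle use the same coordinate. -/
theorem triangle_coord {i j : Fin N} {x y z : Fin N → F} (hxy : DiffAt i x y)
    (hyz : DiffAt j y z) (hxz : (hammingGraph F N).Adj x z) : i = j := by
  by_contra hij
  have hxi : x i ≠ z i := by rw [← hyz.2 i hij]; exact hxy.1
  have hxj : x j ≠ z j := by rw [hxy.2 j (Ne.symm hij)]; exact hyz.1
  exact not_adj_of_two_diffs hij hxi hxj hxz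

/-- Common neighbors of two vertices at Hamming distance 2. -/
theorem common_neighbor {i i' : Fin N} {y y' z : Fin N → F} (hii : i ≠ i')
    (hagree : ∀ j, j ≠ i → j ≠ i' → y j = y' j) (hi : y i ≠ y' i) (hi' : y i' ≠ y' i')
    (hzy : (hammingGraph F N).Adj z y) (hzy' : (hammingGraph F N).Adj z y') :
    z = Function.update y i (y' i) ∨ z = Function.update y i' (y' i') := by
  obtain ⟨k, hk⟩ := adj_iff.mp hzy
  rcases eq_or_ne k i with rfl | hki
  · -- z agrees with y off i
    left
    have hzi : z k = y' k := by
      by_contra hzk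
      have h1 : z i' ≠ y' i' := by rw [hk.2 i' (Ne.symm hii)]; exact hi'
      exact not_adj_of_two_diffs hii hzk h1 hzy'
    funext j
    rcases eq_or_ne j k with rfl | hj
    · rw [Function.update_self]; exact hzi
    · rw [Function.update_of_ne hj]; exact hk.2 j hj
  · rcases eq_or_ne k i' with rfl | hki'
    · -- z agrees with y off i'
      right
      have hzi' : z k = y' k := by
        by_contra hzk
        have h1 : z i ≠ y' i := by rw [hk.2 i (Ne.symm hki)]; exact hi
        exact not_adj_of_two_diffs hii.symm hzk h1 hzy'
      funext j
      rcases eq_or_ne j k with rfl | hj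
      · rw [Function.update_self]; exact hzi'
      · rw [Function.update_of_ne hj]; exact hk.2 j hj
    · exfalso
      have h1 : z i ≠ y' i := by rw [hk.2 i (Ne.symm hki)]; exact hi
      have h2 : z i' ≠ y' i' := by rw [hk.2 i' (Ne.symm hki')]; exact hi'
      exact not_adj_of_two_diffs hii h1 h2 hzy'

end basics
section rigidity
variable {F : Type*} [DecidableEq F] [Zero F] {N : ℕ}

/-- The weight (number of nonzero coordinates) of a word. -/
def wt (x : Fin N → F) : ℕ := #{i | x i ≠ 0}

theorem wt_eq_zero {x : Fin N → F} (h : wt x = 0) : x = 0 := by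
  funext j
  by_contra hj
  have : j ∈ ({i | x i ≠ 0} : Finset (Fin N)) := by
    simp only [Finset.mem_filter, Finset.mem_univ, true_and]; exact hj
  rw [Finset.card_eq_zero.mp h] at this
  exact absurd this (Finset.notMem_empty j)

theorem wt_update_zero {x : Fin N → F} {i : Fin N} (hi : x i ≠ 0) :
    wt (Function.update x i 0) = wt x - 1 := by
  unfold wt
  have : ({j | Function.update x i 0 j ≠ 0} : Finset (Fin N))
      = ({j | x j ≠ 0} : Finset (Fin N)).erase i := by
    ext j
    simp only [Finset.mem_filter, Finset.mem_univ, true_and, Finset.mem_erase]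
    rcases eq_or_ne j i with rfl | hj
    · simp [Function.update_self]
    · simp [Function.update_of_ne hj, hj]
  rw [this, Finset.card_erase_of_mem]
  simp only [Finset.mem_filter, Finset.mem_univ, true_and]; exact hi

theorem mem_wt {x : Fin N → F} {i : Fin N} (hi : x i ≠ 0) :
    i ∈ ({j | x j ≠ 0} : Finset (Fin N)) := by
  simp only [Finset.mem_filter, Finset.mem_univ, true_and]; exact hi

theorem wt_one_eq_update {x : Fin N → F} (h : wt x = 1) :
    ∃ i, x = Function.update (0 : Fin N → F) i (x i) := by
  obtain ⟨i, hi⟩ := Finset.card_eq_one.mp h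
  refine ⟨i, funext fun j => ?_⟩
  rcases eq_or_ne j i with rfl | hj
  · rw [Function.update_self]
  · rw [Function.update_of_ne hj]
    by_contra hxj
    have := mem_wt (x := x) (i := j) (by simpa using hxj)
    rw [hi] at this
    exact hj (Finset.mem_singleton.mp this)

theorem update_eq_self_of_wt {x : Fin N → F} {i : Fin N} (hi : x i ≠ 0) :
    x = Function.update (Function.update x i 0) i (x i) := by
  funext j
  rcases eq_or_ne j i with rfl | hj
  · rw [Function.update_self]
  · rw [Function.update_of_ne hj, Function.update_of_ne hj]

theorem rigid (θ : hammingGraph F N ≃g hammingGraph F N) (h0 : θ 0 = 0)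
    (h1 : ∀ (i : Fin N) (a : F), θ (Function.update (0 : Fin N → F) i a) = Function.update (0 : Fin N → F) i a) :
    ∀ x, θ x = x := by
  suffices h : ∀ n x, wt x = n → θ x = x by
    intro x; exact h (wt x) x rfl
  intro n
  induction n using Nat.strong_induction_on with
  | _ n IH =>
  intro x hw
  match n, hw with
  | 0, hw => rw [wt_eq_zero hw, h0]
  | 1, hw =>
    obtain ⟨i, hi⟩ := wt_one_eq_update hw
    rw [hi, h1]
  | (k+2), hw =>
    -- at least two nonzero coordinates
    have h2 : 2 ≤ #{i | x i ≠ 0} := by unfold wt at hw; omega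
    obtain ⟨i, hi, i', hi', hii⟩ := Finset.one_lt_card.mp h2
    simp only [Finset.mem_filter, Finset.mem_univ, true_and] at hi hi'
    have hyi' : Function.update x i 0 i' = x i' := Function.update_of_ne hii.symm _ _
    have hwyi' : Function.update x i 0 i' ≠ 0 := by rw [hyi']; exact hi'
    have hwy : wt (Function.update x i 0) = k + 1 := by
      rw [wt_update_zero hi, hw]; omega
    have hww' : wt (Function.update (Function.update x i 0) i' 0) = k := by
      rw [wt_update_zero hwyi', hwy]; omega
    have hwy' : wt (Function.update x i' 0) = k + 1 := by
      rw [wt_update_zero hi', hw]; omega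
    have hθy : θ (Function.update x i 0) = Function.update x i 0 :=
      IH (k+1) (by omega) _ hwy
    have hθy' : θ (Function.update x i' 0) = Function.update x i' 0 :=
      IH (k+1) (by omega) _ hwy'
    have hθw : θ (Function.update (Function.update x i 0) i' 0)
        = Function.update (Function.update x i 0) i' 0 := IH k (by omega) _ hww'
    have hadjxy : (hammingGraph F N).Adj x (Function.update x i 0) := by
      rw [adj_iff]
      exact ⟨i, by rw [Function.update_self]; exact hi,
        fun j hj => (Function.update_of_ne hj _ _).symm⟩
    have hadjxy' : (hammingGraph F N).Adj x (Function.update x i' 0) := by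
      rw [adj_iff]
      exact ⟨i', by rw [Function.update_self]; exact hi',
        fun j hj => (Function.update_of_ne hj _ _).symm⟩
    have hθadj : (hammingGraph F N).Adj (θ x) (Function.update x i 0) := by
      have := θ.map_adj_iff.mpr hadjxy; rwa [hθy] at this
    have hθadj' : (hammingGraph F N).Adj (θ x) (Function.update x i' 0) := by
      have := θ.map_adj_iff.mpr hadjxy'; rwa [hθy'] at this
    have hyy'1 : Function.update x i 0 i ≠ Function.update x i' 0 i := by
      rw [Function.update_self, Function.update_of_ne hii]
      exact fun e => hi e.symm
    have hyy'2 : Function.update x i 0 i' ≠ Function.update x i' 0 i' := by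
      rw [Function.update_self, hyi']; exact hi'
    have hagree : ∀ j, j ≠ i → j ≠ i' →
        Function.update x i 0 j = Function.update x i' 0 j := fun j hj hj' => by
      rw [Function.update_of_ne hj, Function.update_of_ne hj']
    rcases common_neighbor hii hagree hyy'1 hyy'2 hθadj hθadj' with h | h
    · -- θ x = update y i (y' i) = x
      rw [h]
      funext j
      rcases eq_or_ne j i with rfl | hj
      · rw [Function.update_self, Function.update_of_ne hii]
      · rw [Function.update_of_ne hj, Function.update_of_ne hj]
    · -- θ x = w, contradiction with injectivity
      exfalso
      have hxw : θ x = Function.update (Function.update x i 0) i' 0 := by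
        rw [h, Function.update_self]
      have hxeq : x = Function.update (Function.update x i 0) i' 0 :=
        θ.injective (by rw [hxw, hθw])
      have : x i' = 0 := by
        conv_lhs => rw [hxeq]
        rw [Function.update_self]
      exact hi' this

end rigidity
section main
variable {F : Type*} [DecidableEq F] {N : ℕ}

/-- The standard automorphism built from a coordinate permutation and
coordinatewise permutations of the alphabet. -/
def toIso (π : Equiv.Perm (Fin N)) (ψ : Fin N → Equiv.Perm F) :
    hammingGraph F N ≃g hammingGraph F N where
  toEquiv := (Equiv.piCongrLeft' (fun _ => F) π).trans
    (Equiv.piCongrRight fun j => ψ (π.symm j))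
  map_rel_iff' := by
    intro x y
    rw [adj_iff, adj_iff]
    have key : ∀ (j : Fin N),
        DiffAt j (fun b => ψ (π.symm b) (x (π.symm b)))
          (fun b => ψ (π.symm b) (y (π.symm b))) ↔ DiffAt (π.symm j) x y := by
      intro j
      constructor
      · rintro ⟨h1, h2⟩
        refine ⟨fun e => h1 (by simp [e]), fun i' hi' => ?_⟩
        have hne : π i' ≠ j := fun e => hi' (by rw [← e, Equiv.symm_apply_apply])
        have := h2 (π i') hne
        simp only [Equiv.symm_apply_apply] at this
        exact (ψ i').injective this
      · rintro ⟨h1, h2⟩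
        refine ⟨fun e => h1 ((ψ (π.symm j)).injective e), fun j' hj' => ?_⟩
        have hne : π.symm j' ≠ π.symm j := fun e => hj' (by
          have := congrArg π e; simpa using this)
        show (ψ (π.symm j')) (x (π.symm j')) = (ψ (π.symm j')) (y (π.symm j'))
        rw [h2 (π.symm j') hne]
    constructor
    · rintro ⟨j, hj⟩
      exact ⟨π.symm j, (key j).mp hj⟩
    · rintro ⟨i, hi⟩
      refine ⟨π i, (key (π i)).mpr ?_⟩
      rwa [Equiv.symm_apply_apply]

theorem toIso_apply (π : Equiv.Perm (Fin N)) (ψ : Fin N → Equiv.Perm F)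
    (x : Fin N → F) (j : Fin N) : toIso π ψ x j = ψ (π.symm j) (x (π.symm j)) := rfl

end main

section count
variable {F : Type*} [Field F] [Fintype F] [DecidableEq F] {N : ℕ}

theorem toIso_injective :
    Function.Injective (fun p : Equiv.Perm (Fin N) × (Fin N → Equiv.Perm F) =>
      toIso p.1 p.2 : _ → hammingGraph F N ≃g hammingGraph F N) := by
  rintro ⟨π, ψ⟩ ⟨π', ψ'⟩ h
  simp only at h
  have happ : ∀ (x : Fin N → F) (j : Fin N),
      ψ (π.symm j) (x (π.symm j)) = ψ' (π'.symm j) (x (π'.symm j)) := by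
    intro x j
    have := congrArg (fun (e : hammingGraph F N ≃g hammingGraph F N) => e x j) h
    simpa [toIso_apply] using this
  have hconst : ∀ (a : F) (j : Fin N), ψ (π.symm j) a = ψ' (π'.symm j) a := by
    intro a j; exact happ (fun _ => a) j
  have hπ : π = π' := by
    refine Equiv.ext fun i => ?_
    by_contra hne
    have hσ : π'.symm (π i) ≠ i := fun e =>
      hne ((congrArg π' e).symm.trans (Equiv.apply_symm_apply π' (π i))).symm
    have := happ (Function.update (fun _ => (0 : F)) i 1) (π i)
    rw [Equiv.symm_apply_apply, Function.update_self,
      Function.update_of_ne hσ] at this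
    have h01 := hconst 0 (π i)
    rw [Equiv.symm_apply_apply] at h01
    rw [← h01] at this
    exact one_ne_zero ((ψ i).injective this)
  subst hπ
  have hψ : ψ = ψ' := by
    funext k
    ext a
    have := hconst a (π k)
    rwa [Equiv.symm_apply_apply] at this
  rw [hψ]

theorem toIso_surjective :
    Function.Surjective (fun p : Equiv.Perm (Fin N) × (Fin N → Equiv.Perm F) =>
      toIso p.1 p.2 : _ → hammingGraph F N ≃g hammingGraph F N) := by
  intro φ
  classical
  -- the unit vectors
  set u : Fin N → F → (Fin N → F) := fun i a => Function.update (0 : Fin N → F) i a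
    with hu
  have hu0 : ∀ i, u i 0 = 0 := by
    intro i; funext j
    rcases eq_or_ne j i with rfl | hj
    · simp only [hu, Function.update_self, Pi.zero_apply]
    · simp only [hu, Function.update_of_ne hj]
  have hadj : ∀ (i : Fin N) (a : F), a ≠ 0 → (hammingGraph F N).Adj (φ 0) (φ (u i a)) := by
    intro i a ha
    rw [φ.map_adj_iff, adj_iff]
    refine ⟨i, ?_, fun j hj => ?_⟩
    · simp only [hu, Function.update_self]; simpa using fun e => ha e.symm
    · simp only [hu, Function.update_of_ne hj]
  -- coordinate map
  have hc : ∀ i : Fin N, ∃ d, DiffAt d (φ 0) (φ (u i 1)) := fun i =>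
    adj_iff.mp (hadj i 1 one_ne_zero)
  set c : Fin N → Fin N := fun i => (hc i).choose with hcdef
  have hcspec : ∀ i, DiffAt (c i) (φ 0) (φ (u i 1)) := fun i => (hc i).choose_spec
  -- Lemma A: the differing coordinate does not depend on the value a
  have hA : ∀ (i : Fin N) (a : F), a ≠ 0 → DiffAt (c i) (φ 0) (φ (u i a)) := by
    intro i a ha
    obtain ⟨d, hd⟩ := adj_iff.mp (hadj i a ha)
    rcases eq_or_ne a 1 with rfl | ha1
    · exact hcspec i
    · have hadj2 : (hammingGraph F N).Adj (φ (u i 1)) (φ (u i a)) := by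
        rw [φ.map_adj_iff, adj_iff]
        refine ⟨i, ?_, fun j hj => ?_⟩
        · simp only [hu, Function.update_self]; simpa using fun e => ha1 e.symm
        · simp only [hu, Function.update_of_ne hj]
      have hcd := triangle_coord (hcspec i).symm hd hadj2
      rw [hcd]; exact hd
  -- Lemma B: off the coordinate `c i`, `φ (u i a)` agrees with `φ 0`
  have hB : ∀ (i : Fin N) (a : F) (j : Fin N), j ≠ c i → φ (u i a) j = φ 0 j := by
    intro i a j hj
    rcases eq_or_ne a 0 with rfl | ha
    · rw [hu0]
    · exact ((hA i a ha).2 j hj).symm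
  -- c is injective
  have hcinj : Function.Injective c := by
    intro i i' hcc
    by_contra hne
    have huu : φ (u i 1) ≠ φ (u i' 1) := by
      intro e
      have := φ.injective e
      have h1 : u i 1 i = u i' 1 i := by rw [this]
      simp only [hu, Function.update_self, Function.update_of_ne hne] at h1
      exact one_ne_zero (h1.trans (Pi.zero_apply i))
    have hagree : ∀ j, j ≠ c i → φ (u i 1) j = φ (u i' 1) j := by
      intro j hj
      rw [hB i 1 j hj, ← hB i' 1 j (by rw [← hcc]; exact hj)]
    have hDadj : (hammingGraph F N).Adj (φ (u i 1)) (φ (u i' 1)) :=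
      adj_iff.mpr ⟨c i, diffAt_of_agree huu hagree⟩
    rw [φ.map_adj_iff] at hDadj
    refine not_adj_of_two_diffs hne ?_ ?_ hDadj
    · simp only [hu, Function.update_self, Function.update_of_ne hne]
      simpa using one_ne_zero
    · simp only [hu, Function.update_of_ne (Ne.symm hne), Function.update_self]
      simpa using zero_ne_one
  have hcbij : Function.Bijective c := Finite.injective_iff_bijective.mp hcinj
  set π : Equiv.Perm (Fin N) := Equiv.ofBijective c hcbij with hπdef
  have hπ : ∀ i, π i = c i := fun i => rfl
  -- the alphabet permutations
  set s : Fin N → F → F := fun i a => φ (u i a) (c i) with hsdef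
  have hsinj : ∀ i, Function.Injective (s i) := by
    intro i a b hab
    have : φ (u i a) = φ (u i b) := by
      funext j
      rcases eq_or_ne j (c i) with rfl | hj
      · exact hab
      · rw [hB i a j hj, hB i b j hj]
    have := φ.injective this
    have h1 : u i a i = u i b i := by rw [this]
    simp only [hu, Function.update_self] at h1
    exact h1
  set ψ : Fin N → Equiv.Perm F := fun i =>
    Equiv.ofBijective (s i) (Finite.injective_iff_bijective.mp (hsinj i)) with hψdef
  have hψa : ∀ i a, ψ i a = s i a := fun i a => rfl
  refine ⟨⟨π, ψ⟩, ?_⟩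
  -- the composite θ = Ψ⁻¹ ∘ φ fixes 0 and all weight-one vertices
  set Ψ : hammingGraph F N ≃g hammingGraph F N := toIso π ψ with hΨdef
  have hθ := rigid (F := F) (N := N) (φ.trans Ψ.symm) ?_ ?_
  · show toIso π ψ = φ
    refine (RelIso.ext fun x => ?_).symm
    have := hθ x
    show φ x = Ψ x
    calc φ x = Ψ (Ψ.symm (φ x)) := (Ψ.apply_symm_apply (φ x)).symm
    _ = Ψ x := by rw [show Ψ.symm (φ x) = x from this]
  · -- fixes 0
    show Ψ.symm (φ 0) = 0
    have hgoal : φ 0 = Ψ 0 := by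
      funext j
      rw [hΨdef, toIso_apply]
      show φ 0 j = ψ (π.symm j) ((0 : Fin N → F) (π.symm j))
      rw [Pi.zero_apply, hψa, hsdef]
      show φ 0 j = φ (u (π.symm j) 0) (c (π.symm j))
      rw [hu0]
      have : c (π.symm j) = j := by rw [← hπ, Equiv.apply_symm_apply]
      rw [this]
    rw [hgoal]
    exact Ψ.symm_apply_apply 0
  · -- fixes weight-one vertices
    intro i a
    show Ψ.symm (φ (Function.update (0 : Fin N → F) i a)) = _
    have hgoal : φ (u i a) = Ψ (u i a) := by
      funext j
      rw [hΨdef, toIso_apply]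
      rcases eq_or_ne j (c i) with rfl | hj
      · have hsymm : π.symm (c i) = i := by
          rw [← hπ i, Equiv.symm_apply_apply]
        rw [hsymm, hψa, hsdef]
        simp only [hu, Function.update_self]
      · have hsymm : π.symm j ≠ i := by
          intro e
          apply hj
          rw [← hπ i, ← e, Equiv.apply_symm_apply]
        have hval : u i a (π.symm j) = 0 := by
          simp only [hu, Function.update_of_ne hsymm, Pi.zero_apply]
        rw [hval, hψa, hsdef]
        show φ (u i a) j = φ (u (π.symm j) 0) (c (π.symm j))
        rw [hu0]
        have : c (π.symm j) = j := by rw [← hπ, Equiv.apply_symm_apply]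
        rw [this]
        exact hB i a j hj
    show Ψ.symm (φ (u i a)) = u i a
    rw [hgoal]
    exact Ψ.symm_apply_apply (u i a)

end count

/-- The automorphism group of the Hamming graph on `F^N` has order `(q!)^N · N!`. -/
theorem stmt14 (F : Type*) [Field F] [Fintype F] [DecidableEq F] (N : ℕ) :
    Nat.card (hammingGraph F N ≃g hammingGraph F N)
      = (Fintype.card F).factorial ^ N * N.factorial := by
  have hbij : Function.Bijective
      (fun p : Equiv.Perm (Fin N) × (Fin N → Equiv.Perm F) =>
        (toIso p.1 p.2 : hammingGraph F N ≃g hammingGraph F N)) :=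
    ⟨toIso_injective, toIso_surjective⟩
  rw [← Nat.card_eq_of_bijective _ hbij, Nat.card_eq_fintype_card,
    Fintype.card_prod, Fintype.card_perm, Fintype.card_fun, Fintype.card_perm,
    Fintype.card_fin, mul_comm]
end

section
/- Let F be a finite field of order q. The number of distinct propelinear codes in F^N containing 0 is at most |Aut(F^N)|^{N·log₂ q} = ((q!)^N · N!)^{N log₂ q}. -/
open Finset

/-- A permutation of `F^N` is an automorphism of the Hamming graph iff it is
composed from a coordinate permutation and per-coordinate alphabet permutations. -/
def IsHammAut {F : Type*} {N : ℕ} (g : Equiv.Perm (Fin N → F)) : Prop :=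
  ∃ π : Equiv.Perm (Fin N), ∃ ψ : Fin N → Equiv.Perm F,
    ∀ x i, g x i = ψ i (x (π.symm i))

/-- A code `C ∋ 0` is propelinear if there are Hamming-graph automorphisms
`Φ_v` preserving `C` with `Φ_v 0 = v`, closed under composition. -/
def IsPropelinearCode {F : Type*} [Zero F] {N : ℕ} (C : Set (Fin N → F)) : Prop :=
  (0 : Fin N → F) ∈ C ∧ ∃ Φ : (Fin N → F) → Equiv.Perm (Fin N → F),
    (∀ v ∈ C, IsHammAut (Φ v) ∧ (Φ v) '' C = C ∧ Φ v 0 = v) ∧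
    (∀ a ∈ C, ∀ b ∈ C, Φ a * Φ b = Φ (Φ a b))

lemma gen_aux {G : Type*} [Group G] [Finite G] :
    ∀ n (H : Subgroup G), Nat.card G - Nat.card H ≤ n →
    ∃ s : Finset G, Subgroup.closure (↑s : Set G) ⊔ H = ⊤ ∧
      Nat.card H * 2 ^ s.card ≤ Nat.card G := by
  classical
  intro n
  induction n with
  | zero =>
    intro H hn
    have hle : Nat.card H ≤ Nat.card G :=
      Nat.card_le_card_of_injective _ Subtype.val_injective
    have htop : H = ⊤ := Subgroup.eq_top_of_card_eq H (by omega)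
    refine ⟨∅, by simp [htop], ?_⟩
    subst htop
    simp only [Finset.card_empty, pow_zero, mul_one, Subgroup.card_top]
    exact le_rfl
  | succ n ih =>
    intro H hn
    by_cases hH : H = ⊤
    · refine ⟨∅, by simp [hH], ?_⟩
      subst hH
      simp only [Finset.card_empty, pow_zero, mul_one, Subgroup.card_top]
      exact le_rfl
    · obtain ⟨g, hg⟩ : ∃ g, g ∉ H := by
        by_contra h
        push_neg at h
        exact hH ((Subgroup.eq_top_iff' H).2 h)
      set H' := H ⊔ Subgroup.closure {g} with hH'
      have hle : H ≤ H' := le_sup_left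
      have hgH' : g ∈ H' :=
        Subgroup.mem_sup_right (Subgroup.subset_closure rfl)
      have hlt : H < H' := lt_of_le_of_ne hle (fun h => hg (h ▸ hgH'))
      have hcard : Nat.card H < Nat.card H' :=
        lt_of_not_ge fun h => hlt.ne (Subgroup.eq_of_le_of_card_ge hle h)
      have hpos : 0 < Nat.card H := Nat.card_pos
      obtain ⟨m, hm⟩ := Subgroup.card_dvd_of_le hle
      have hm2 : 2 ≤ m := by nlinarith
      have h2 : 2 * Nat.card H ≤ Nat.card H' := by nlinarith
      have hG : Nat.card H' ≤ Nat.card G :=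
        Nat.card_le_card_of_injective _ Subtype.val_injective
      obtain ⟨s', hcl, hc⟩ := ih H' (by omega)
      have h1 : Subgroup.closure (↑s' : Set G) ≤ Subgroup.closure ↑(insert g s') :=
        Subgroup.closure_mono (by rw [Finset.coe_insert]; exact Set.subset_insert _ _)
      have h2g : Subgroup.closure ({g} : Set G) ≤ Subgroup.closure ↑(insert g s') :=
        Subgroup.closure_mono
          (by rw [Finset.coe_insert]; exact Set.singleton_subset_iff.2 (Set.mem_insert _ _))
      refine ⟨insert g s', ?_, ?_⟩
      · rw [eq_top_iff, ← hcl, hH']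
        exact sup_le (le_sup_of_le_left h1)
          (sup_le le_sup_right (le_sup_of_le_left h2g))
      · calc Nat.card H * 2 ^ (insert g s').card
            ≤ Nat.card H * 2 ^ (s'.card + 1) :=
              Nat.mul_le_mul_left _ (Nat.pow_le_pow_right (by norm_num)
                (Finset.card_insert_le _ _))
          _ = 2 * Nat.card H * 2 ^ s'.card := by ring
          _ ≤ Nat.card H' * 2 ^ s'.card := Nat.mul_le_mul_right _ h2
          _ ≤ Nat.card G := hc

lemma gen {G : Type*} [Group G] [Finite G] (S : Subgroup G) :
    ∃ s : Finset G, ↑s ⊆ (S : Set G) ∧ Subgroup.closure (↑s : Set G) = S ∧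
      2 ^ s.card ≤ Nat.card S := by
  classical
  obtain ⟨t, ht, hc⟩ := gen_aux (Nat.card S) (⊥ : Subgroup ↥S) (by simp)
  rw [sup_bot_eq] at ht
  rw [Subgroup.card_bot, one_mul] at hc
  refine ⟨t.image S.subtype, ?_, ?_, ?_⟩
  · intro x hx
    simp only [Finset.coe_image, Set.mem_image] at hx
    obtain ⟨y, _, rfl⟩ := hx
    exact y.2
  · rw [Finset.coe_image, ← MonoidHom.map_closure, ht, ← MonoidHom.range_eq_map,
      Subgroup.range_subtype]
  · exact le_trans (Nat.pow_le_pow_right (by norm_num) (Finset.card_image_le)) hc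

lemma hamm_one {F : Type*} {N : ℕ} : IsHammAut (1 : Equiv.Perm (Fin N → F)) :=
  ⟨1, fun _ => 1, fun _ _ => rfl⟩

lemma hamm_card (F : Type*) [Fintype F] (N : ℕ) :
    Nat.card {g : Equiv.Perm (Fin N → F) // IsHammAut g}
      ≤ (Fintype.card F).factorial ^ N * N.factorial := by
  classical
  have hsurj : Function.Surjective
      (fun p : (Fin N → Equiv.Perm F) × Equiv.Perm (Fin N) =>
        (⟨(Equiv.arrowCongr p.2 (Equiv.refl F)).trans (Equiv.piCongrRight p.1),
          ⟨p.2, p.1, fun x i => rfl⟩⟩ :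
          {g : Equiv.Perm (Fin N → F) // IsHammAut g})) := by
    rintro ⟨g, π, ψ, h⟩
    refine ⟨(ψ, π), Subtype.ext (Equiv.ext fun x => funext fun i => ?_)⟩
    exact (h x i).symm
  calc Nat.card {g : Equiv.Perm (Fin N → F) // IsHammAut g}
      ≤ Nat.card ((Fin N → Equiv.Perm F) × Equiv.Perm (Fin N)) :=
        Nat.card_le_card_of_surjective _ hsurj
    _ = (Fintype.card F).factorial ^ N * N.factorial := by
        rw [Nat.card_prod, Nat.card_fun]
        simp [Nat.card_eq_fintype_card, Fintype.card_perm]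

lemma encode {F : Type*} [Zero F] [Fintype F] {N : ℕ} (C : Set (Fin N → F))
    (hC : IsPropelinearCode C) :
    ∃ f : Fin (Nat.log 2 (Fintype.card F ^ N)) →
        {g : Equiv.Perm (Fin N → F) // IsHammAut g},
      (fun g : Equiv.Perm (Fin N → F) => g 0) ''
        ((Subgroup.closure (Subtype.val '' Set.range f) :
          Subgroup (Equiv.Perm (Fin N → F))) : Set (Equiv.Perm (Fin N → F))) = C := by
  classical
  obtain ⟨h0, Φ, hΦ, hmul⟩ := hC
  have hΦ0 : Φ 0 = 1 := by
    have h := hmul 0 h0 0 h0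
    rw [(hΦ 0 h0).2.2] at h
    exact mul_left_cancel (a := Φ 0) (by rw [mul_one]; exact h)
  have hmem : ∀ {a b : Fin N → F}, a ∈ C → b ∈ C → Φ a b ∈ C := by
    intro a b ha hb
    rw [← (hΦ a ha).2.1]
    exact Set.mem_image_of_mem _ hb
  set S : Subgroup (Equiv.Perm (Fin N → F)) :=
    { carrier := Φ '' C
      mul_mem' := by
        rintro _ _ ⟨a, ha, rfl⟩ ⟨b, hb, rfl⟩
        rw [hmul a ha b hb]
        exact ⟨Φ a b, hmem ha hb, rfl⟩
      one_mem' := ⟨0, h0, hΦ0⟩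
      inv_mem' := by
        intro x hx
        have hpow : ∀ n : ℕ, x ^ (n + 1) ∈ Φ '' C := by
          intro n
          induction n with
          | zero => simpa using hx
          | succ k ihk =>
            obtain ⟨a, ha, hax⟩ := ihk
            obtain ⟨b, hb, hbx⟩ := hx
            rw [pow_succ, ← hax, ← hbx, hmul a ha b hb]
            exact ⟨Φ a b, hmem ha hb, rfl⟩
        have ho : 0 < orderOf x := orderOf_pos x
        have hone : x * x ^ (2 * orderOf x - 1) = 1 := by
          rw [← pow_succ']
          have h2 : 2 * orderOf x - 1 + 1 = 2 * orderOf x := by omega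
          rw [h2, mul_comm 2, pow_mul, pow_orderOf_eq_one, one_pow]
        have hinv : x⁻¹ = x ^ (2 * orderOf x - 1) :=
          inv_eq_of_mul_eq_one_right hone
        have h3 : 2 * orderOf x - 1 = (2 * orderOf x - 2) + 1 := by omega
        rw [hinv, h3]
        exact hpow _ } with hSdef
  have hcardS : Nat.card S ≤ Fintype.card F ^ N := by
    have h1 : Nat.card S = (Φ '' C).ncard := Nat.card_coe_set_eq _
    rw [h1]
    calc (Φ '' C).ncard ≤ C.ncard := Set.ncard_image_le C.toFinite
      _ ≤ (Set.univ : Set (Fin N → F)).ncard :=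
          Set.ncard_le_ncard (Set.subset_univ C) Set.finite_univ
      _ = Fintype.card F ^ N := by
          rw [Set.ncard_univ, Nat.card_eq_fintype_card]
          simp [Fintype.card_fun]
  obtain ⟨s, hsub, hcl, hp2⟩ := gen S
  set K := Nat.log 2 (Fintype.card F ^ N) with hK
  have hsK : s.card ≤ K := by
    have hq : Fintype.card F ^ N ≠ 0 := by positivity
    exact (Nat.le_log_iff_pow_le one_lt_two hq).2 (le_trans hp2 hcardS)
  have hH : ∀ g ∈ s, IsHammAut g := by
    intro g hg
    obtain ⟨v, hv, rfl⟩ := hsub hg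
    exact (hΦ v hv).1
  set l := s.toList with hl
  have hlen : l.length = s.card := Finset.length_toList s
  have hlK : l.length ≤ K := by omega
  set f : Fin K → {g : Equiv.Perm (Fin N → F) // IsHammAut g} :=
    fun i => if h : (i : ℕ) < l.length then
        ⟨l.get ⟨i, h⟩, hH _ (Finset.mem_toList.1 (List.get_mem _ _))⟩
      else ⟨1, hamm_one⟩ with hfdef
  have hsub1 : (↑s : Set (Equiv.Perm (Fin N → F))) ⊆ Subtype.val '' Set.range f := by
    intro g hg
    have hg' : g ∈ l := Finset.mem_toList.2 (Finset.mem_coe.1 hg)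
    obtain ⟨n, hn⟩ := List.mem_iff_get.1 hg'
    refine ⟨f ⟨(n : ℕ), lt_of_lt_of_le n.2 hlK⟩, Set.mem_range_self _, ?_⟩
    rw [hfdef]
    simp only [dif_pos (show ((⟨(n : ℕ), lt_of_lt_of_le n.2 hlK⟩ : Fin K) : ℕ) < l.length from n.2)]
    exact hn
  have hsub2 : Subtype.val '' Set.range f ⊆ (↑s : Set (Equiv.Perm (Fin N → F))) ∪ {1} := by
    rintro _ ⟨_, ⟨i, rfl⟩, rfl⟩
    rw [hfdef]
    by_cases h : (i : ℕ) < l.length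
    · simp only [dif_pos h]
      left
      exact Finset.mem_coe.2 (Finset.mem_toList.1 (List.get_mem _ _))
    · simp only [dif_neg h]
      right
      rfl
  have hcl2 : Subgroup.closure (Subtype.val '' Set.range f) = S := by
    apply le_antisymm
    · have hu : Subgroup.closure ((↑s : Set (Equiv.Perm (Fin N → F))) ∪ {1}) = S := by
        rw [Subgroup.closure_union, Subgroup.closure_singleton_one, sup_bot_eq, hcl]
      rw [← hu]
      exact Subgroup.closure_mono hsub2
    · rw [← hcl]
      exact Subgroup.closure_mono hsub1
  refine ⟨f, ?_⟩
  rw [hcl2]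
  have hS : (S : Set (Equiv.Perm (Fin N → F))) = Φ '' C := rfl
  rw [hS]
  ext y
  constructor
  · rintro ⟨_, ⟨v, hv, rfl⟩, rfl⟩
    show Φ v 0 ∈ C
    rw [(hΦ v hv).2.2]
    exact hv
  · intro hy
    exact ⟨Φ y, ⟨y, hy, rfl⟩, (hΦ y hy).2.2⟩

/-- The number of propelinear codes in `F^N` is at most
`((q!)^N · N!) ^ (N · log₂ q)`. -/
theorem stmt17 (F : Type*) [Field F] [Fintype F] (N : ℕ) :
    (Nat.card {C : Set (Fin N → F) // IsPropelinearCode C} : ℝ)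
      ≤ (((Fintype.card F).factorial ^ N * N.factorial : ℕ) : ℝ)
          ^ ((N : ℝ) * Real.logb 2 (Fintype.card F)) := by
  classical
  set q := Fintype.card F with hq
  set K := Nat.log 2 (q ^ N) with hK
  set A := q.factorial ^ N * N.factorial with hA
  set Hamm := {g : Equiv.Perm (Fin N → F) // IsHammAut g} with hHamm
  -- injective encoding
  set Θ : {C : Set (Fin N → F) // IsPropelinearCode C} → (Fin K → Hamm) :=
    fun c => (encode c.1 c.2).choose with hΘ
  have hΘspec : ∀ c, (fun g : Equiv.Perm (Fin N → F) => g 0) ''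
      ((Subgroup.closure (Subtype.val '' Set.range (Θ c)) :
        Subgroup (Equiv.Perm (Fin N → F))) : Set (Equiv.Perm (Fin N → F))) = c.1 :=
    fun c => (encode c.1 c.2).choose_spec
  have hinj : Function.Injective Θ := by
    intro c c' h
    apply Subtype.ext
    rw [← hΘspec c, ← hΘspec c', h]
  have h1 : Nat.card {C : Set (Fin N → F) // IsPropelinearCode C}
      ≤ Nat.card Hamm ^ K := by
    calc Nat.card {C : Set (Fin N → F) // IsPropelinearCode C}
        ≤ Nat.card (Fin K → Hamm) := Nat.card_le_card_of_injective Θ hinj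
      _ = Nat.card Hamm ^ K := by rw [Nat.card_fun]; simp
  have h2 : Nat.card Hamm ≤ A := hamm_card F N
  have h3 : Nat.card {C : Set (Fin N → F) // IsPropelinearCode C} ≤ A ^ K :=
    le_trans h1 (Nat.pow_le_pow_left h2 K)
  have hA1 : (1 : ℝ) ≤ (A : ℝ) := by
    have : 1 ≤ A := Nat.one_le_iff_ne_zero.2 (by positivity)
    exact_mod_cast this
  have hKle : (K : ℝ) ≤ (N : ℝ) * Real.logb 2 q := by
    have hpow : (2 : ℕ) ^ K ≤ q ^ N := Nat.pow_log_le_self 2 (by positivity)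
    have hpowR : (2 : ℝ) ^ K ≤ (q : ℝ) ^ N := by exact_mod_cast hpow
    have hlogb : Real.logb 2 ((2 : ℝ) ^ K) ≤ Real.logb 2 ((q : ℝ) ^ N) :=
      Real.logb_le_logb_of_le one_lt_two (by positivity) hpowR
    rw [Real.logb_pow, Real.logb_pow, Real.logb_self_eq_one one_lt_two, mul_one] at hlogb
    exact hlogb
  calc (Nat.card {C : Set (Fin N → F) // IsPropelinearCode C} : ℝ)
      ≤ ((A ^ K : ℕ) : ℝ) := by exact_mod_cast h3
    _ = (A : ℝ) ^ (K : ℝ) := by rw [Nat.cast_pow, Real.rpow_natCast]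
    _ ≤ (A : ℝ) ^ ((N : ℝ) * Real.logb 2 q) :=
        Real.rpow_le_rpow_of_exponent_le hA1 hKle
end
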